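/- Set v^{(j)} := Y^{j−1}(y_1 z_2 − y_2 z_1) for 1 ≤ j ≤ md−1, and set v_low := y_d z_{E+1} − y_{d+1} z_E. Then for each 1 ≤ j ≤ md−1 the polynomial v^{(j)} is nonzero, the polynomial X^{md−1−j}(v_low) is nonzero, and there exists a nonzero scalar λ ∈ ℂ such that X^{md−1−j}(v_low) = λ · v^{(j)}. (This is the symmetry relating the coefficients obtained from the highest weight vector by acting with Y to those obtained from the lowest weight vector by acting with X.) -/

import Mathlib

open MvPolynomial Finset

/-- `y_a = x₁^{d-a+1} x₂^{a-1}` for `1 ≤ a ≤ d+1`, and `0` for other integers `a`.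
Variables: `X 0 = x₁`, `X 1 = x₂`, `X 2 = w₁`, `X 3 = w₂`. -/
noncomputable def yv (d : ℕ) (a : ℤ) : MvPolynomial (Fin 4) ℂ :=
  if 1 ≤ a ∧ a ≤ (d : ℤ) + 1 then
    X 0 ^ ((d : ℤ) + 1 - a).toNat * X 1 ^ (a - 1).toNat
  else 0

/-- `z_b = w₁^{E-b+1} w₂^{b-1}` for `1 ≤ b ≤ E+1`, and `0` for other integers `b`. -/
noncomputable def zv (e : ℕ) (b : ℤ) : MvPolynomial (Fin 4) ℂ :=
  if 1 ≤ b ∧ b ≤ (e : ℤ) + 1 then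
    X 2 ^ ((e : ℤ) + 1 - b).toNat * X 3 ^ (b - 1).toNat
  else 0

/-- The derivation `Y = x₂·∂/∂x₁ + w₂·∂/∂w₁` of `ℂ[x₁,x₂,w₁,w₂]`. -/
noncomputable def Yop : MvPolynomial (Fin 4) ℂ → MvPolynomial (Fin 4) ℂ :=
  fun p => X 1 * pderiv 0 p + X 3 * pderiv 2 p

/-- The derivation `X = x₁·∂/∂x₂ + w₁·∂/∂w₂` of `ℂ[x₁,x₂,w₁,w₂]`. -/
noncomputable def Xop : MvPolynomial (Fin 4) ℂ → MvPolynomial (Fin 4) ℂ :=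
  fun p => X 0 * pderiv 1 p + X 2 * pderiv 3 p

/-! ### Auxiliary machinery -/

noncomputable def Tm (α β γ δ : ℕ) : MvPolynomial (Fin 4) ℂ :=
  X 0 ^ α * X 1 ^ β * X 2 ^ γ * X 3 ^ δ

noncomputable def co (a b k i : ℕ) : ℂ :=
  ((k.choose i * a.descFactorial i * b.descFactorial (k-i) : ℕ) : ℂ)

noncomputable def U : MvPolynomial (Fin 4) ℂ := X 0 * X 3 - X 1 * X 2

lemma Yop_Tm (α β γ δ : ℕ) :
    Yop (Tm α β γ δ) = (α : ℂ) • Tm (α-1) (β+1) γ δ + (γ : ℂ) • Tm α β (γ-1) (δ+1) := by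
  cases α <;> cases γ <;>
    simp [Yop, Tm, pderiv_mul, pderiv_X, Pi.single_apply, smul_eq_C_mul] <;> ring

lemma Xop_Tm (α β γ δ : ℕ) :
    Xop (Tm α β γ δ) = (β : ℂ) • Tm (α+1) (β-1) γ δ + (δ : ℂ) • Tm α β (γ+1) (δ-1) := by
  cases β <;> cases δ <;>
    simp [Xop, Tm, pderiv_mul, pderiv_X, Pi.single_apply, smul_eq_C_mul] <;> ring

lemma Yop_sum {ι : Type*} (s : Finset ι) (f : ι → MvPolynomial (Fin 4) ℂ) :
    Yop (∑ i ∈ s, f i) = ∑ i ∈ s, Yop (f i) := by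
  simp [Yop, map_sum, Finset.mul_sum, Finset.sum_add_distrib]

lemma Xop_sum {ι : Type*} (s : Finset ι) (f : ι → MvPolynomial (Fin 4) ℂ) :
    Xop (∑ i ∈ s, f i) = ∑ i ∈ s, Xop (f i) := by
  simp [Xop, map_sum, Finset.mul_sum, Finset.sum_add_distrib]

lemma Yop_smul (c : ℂ) (p : MvPolynomial (Fin 4) ℂ) : Yop (c • p) = c • Yop p := by
  simp [Yop, map_smul, smul_add, mul_smul_comm]

lemma Xop_smul (c : ℂ) (p : MvPolynomial (Fin 4) ℂ) : Xop (c • p) = c • Xop p := by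
  simp [Xop, map_smul, smul_add, mul_smul_comm]

lemma pascal_step (a b k i : ℕ) (h : i < k) :
    k.choose i * a.descFactorial i * b.descFactorial (k-i) * (a-i)
    + k.choose (i+1) * a.descFactorial (i+1) * b.descFactorial (k-(i+1)) * (b-(k-(i+1)))
    = (k+1).choose (i+1) * a.descFactorial (i+1) * b.descFactorial (k-i) := by
  have h1 : k - i = (k-(i+1)) + 1 := by omega
  rw [h1, Nat.choose_succ_succ]
  simp only [Nat.descFactorial_succ]
  ring

lemma YopIter (a b k : ℕ) :
    Yop^[k] (Tm a 0 b 0)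
    = ∑ i ∈ range (k+1), co a b k i • Tm (a-i) i (b-(k-i)) (k-i) := by
  induction k with
  | zero => simp [co]
  | succ k ih =>
    rw [Function.iterate_succ_apply', ih, Yop_sum]
    simp only [Yop_smul, Yop_Tm, smul_add, smul_smul]
    rw [sum_add_distrib]
    rw [Finset.sum_range_succ' (fun i => (co a b (k+1) i) • Tm (a-i) i (b-(k+1-i)) (k+1-i)) (k+1)]
    rw [Finset.sum_range_succ'
      (fun i => (co a b k i * ((b - (k-i) : ℕ) : ℂ)) • Tm (a-i) i (b-(k-i)-1) (k-i+1)) k]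
    have hzero : (co a b k (k+1) * ((b - (k-(k+1)) : ℕ) : ℂ)) • Tm (a-(k+1)) (k+1) (b-(k-(k+1))-1) (k-(k+1)+1) = 0 := by
      simp [co, Nat.choose_succ_self]
    have hext : ∑ x ∈ range k,
        (co a b k (x+1) * ((b - (k-(x+1)) : ℕ) : ℂ)) • Tm (a-(x+1)) (x+1) (b-(k-(x+1))-1) (k-(x+1)+1)
        = ∑ x ∈ range (k+1),
        (co a b k (x+1) * ((b - (k-(x+1)) : ℕ) : ℂ)) • Tm (a-(x+1)) (x+1) (b-(k-(x+1))-1) (k-(x+1)+1) := by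
      rw [Finset.sum_range_succ, hzero, add_zero]
    rw [hext, ← add_assoc, ← sum_add_distrib]
    refine congrArg₂ (· + ·) ?_ ?_
    · apply Finset.sum_congr rfl
      intro x hx
      have hxk : x ≤ k := by simpa using Nat.lt_succ_iff.mp (mem_range.mp hx)
      have e1 : a - x - 1 = a - (x+1) := by omega
      rcases eq_or_lt_of_le hxk with heq | hlt
      · subst heq
        rw [hzero, add_zero]
        have e4 : x + 1 - (x+1) = 0 := by omega
        have e5 : x - x = 0 := by omega
        rw [e1, e4, e5]
        simp only [Nat.sub_zero]
        congr 1
        simp [co, e5, Nat.descFactorial_succ]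
        push_cast
        ring
      · have e2 : b - (k-(x+1)) - 1 = b - (k-x) := by omega
        have e4 : k + 1 - (x+1) = k - x := by omega
        have e5 : k - (x+1) + 1 = k - x := by omega
        rw [e1, e2, e4, e5]
        rw [← add_smul]
        congr 1
        have key := pascal_step a b k x hlt
        simp only [co]
        push_cast [← key]
        ring
    · have e6 : b - k - 1 = b - (k+1) := by omega
      simp only [Nat.sub_zero, e6]
      congr 1
      simp only [co, Nat.choose_zero_right, Nat.descFactorial_zero, Nat.sub_zero,
        Nat.descFactorial_succ]
      push_cast
      ring

lemma XopIter (a b k : ℕ) :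
    Xop^[k] (Tm 0 a 0 b)
    = ∑ i ∈ range (k+1), co a b k i • Tm i (a-i) (k-i) (b-(k-i)) := by
  induction k with
  | zero => simp [co]
  | succ k ih =>
    rw [Function.iterate_succ_apply', ih, Xop_sum]
    simp only [Xop_smul, Xop_Tm, smul_add, smul_smul]
    rw [sum_add_distrib]
    rw [Finset.sum_range_succ' (fun i => (co a b (k+1) i) • Tm i (a-i) (k+1-i) (b-(k+1-i))) (k+1)]
    rw [Finset.sum_range_succ'
      (fun i => (co a b k i * ((b - (k-i) : ℕ) : ℂ)) • Tm i (a-i) (k-i+1) (b-(k-i)-1)) k]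
    have hzero : (co a b k (k+1) * ((b - (k-(k+1)) : ℕ) : ℂ)) • Tm (k+1) (a-(k+1)) (k-(k+1)+1) (b-(k-(k+1))-1) = 0 := by
      simp [co, Nat.choose_succ_self]
    have hext : ∑ x ∈ range k,
        (co a b k (x+1) * ((b - (k-(x+1)) : ℕ) : ℂ)) • Tm (x+1) (a-(x+1)) (k-(x+1)+1) (b-(k-(x+1))-1)
        = ∑ x ∈ range (k+1),
        (co a b k (x+1) * ((b - (k-(x+1)) : ℕ) : ℂ)) • Tm (x+1) (a-(x+1)) (k-(x+1)+1) (b-(k-(x+1))-1) := by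
      rw [Finset.sum_range_succ, hzero, add_zero]
    rw [hext, ← add_assoc, ← sum_add_distrib]
    refine congrArg₂ (· + ·) ?_ ?_
    · apply Finset.sum_congr rfl
      intro x hx
      have hxk : x ≤ k := by simpa using Nat.lt_succ_iff.mp (mem_range.mp hx)
      have e1 : a - x - 1 = a - (x+1) := by omega
      rcases eq_or_lt_of_le hxk with heq | hlt
      · subst heq
        rw [hzero, add_zero]
        have e4 : x + 1 - (x+1) = 0 := by omega
        have e5 : x - x = 0 := by omega
        rw [e1, e4, e5]
        simp only [Nat.sub_zero]
        congr 1
        simp [co, e5, Nat.descFactorial_succ]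
        push_cast
        ring
      · have e2 : b - (k-(x+1)) - 1 = b - (k-x) := by omega
        have e4 : k + 1 - (x+1) = k - x := by omega
        have e5 : k - (x+1) + 1 = k - x := by omega
        rw [e1, e2, e4, e5]
        rw [← add_smul]
        congr 1
        have key := pascal_step a b k x hlt
        simp only [co]
        push_cast [← key]
        ring
    · have e6 : b - k - 1 = b - (k+1) := by omega
      simp only [Nat.sub_zero, e6]
      congr 1
      simp only [co, Nat.choose_zero_right, Nat.descFactorial_zero, Nat.sub_zero,
        Nat.descFactorial_succ]
      push_cast
      ring

lemma sum_range_congr {M : Type*} [AddCommMonoid M] (f : ℕ → M) (K L : ℕ)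
    (h : ∀ i, min K L < i → f i = 0) :
    ∑ i ∈ range (K+1), f i = ∑ i ∈ range (L+1), f i := by
  rcases le_total K L with hKL | hKL
  · exact Finset.sum_subset (by simp; omega)
      (fun i hi hni => h i (by simp at hi hni ⊢; omega))
  · exact (Finset.sum_subset (by simp; omega)
      (fun i hi hni => h i (by simp at hi hni ⊢; omega))).symm

lemma key_identity (a b s t : ℕ) (hs : s ≤ a) (ht : t ≤ b) :
    (((a+b-(s+t)).choose (a-s) * Nat.descFactorial a (a-s) * Nat.descFactorial b (a+b-(s+t)-(a-s)) : ℕ) : ℂ)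
    * (s+t).factorial
    = ((a+b-(s+t)).factorial : ℂ) * (((s+t).choose s * Nat.descFactorial a s * Nat.descFactorial b t : ℕ)) := by
  have e1 : a+b-(s+t) = (a-s)+(b-t) := by omega
  rw [e1, show (a-s)+(b-t)-(a-s) = b-t by omega]
  have h1 : Nat.descFactorial a (a-s) * (Nat.factorial s) = a.factorial := by
    have := Nat.factorial_mul_descFactorial (Nat.sub_le a s)
    rw [show a - (a-s) = s by omega] at this
    linarith [this]
  have h2 : Nat.descFactorial b (b-t) * (Nat.factorial t) = b.factorial := by
    have := Nat.factorial_mul_descFactorial (Nat.sub_le b t)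
    rw [show b - (b-t) = t by omega] at this
    linarith [this]
  have h3 : Nat.descFactorial a s * (Nat.factorial (a-s)) = a.factorial := by
    have := Nat.factorial_mul_descFactorial hs
    linarith [this]
  have h4 : Nat.descFactorial b t * (Nat.factorial (b-t)) = b.factorial := by
    have := Nat.factorial_mul_descFactorial ht
    linarith [this]
  have h5 : ((a-s)+(b-t)).choose (a-s) * Nat.factorial (a-s) * Nat.factorial (b-t)
      = ((a-s)+(b-t)).factorial := by
    have h := Nat.add_choose_mul_factorial_mul_factorial (b-t) (a-s)
    rw [Nat.add_comm (b-t) (a-s)] at h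
    rw [mul_right_comm]; exact h
  have h6 : (s+t).choose s * Nat.factorial s * Nat.factorial t = (s+t).factorial := by
    have h := Nat.add_choose_mul_factorial_mul_factorial t s
    rw [Nat.add_comm t s] at h
    rw [mul_right_comm]; exact h
  have c1 : ((Nat.descFactorial a (a-s) : ℕ) : ℂ) = (a.factorial : ℂ) / (s.factorial : ℂ) := by
    rw [eq_div_iff (by exact_mod_cast Nat.factorial_ne_zero s)]; exact_mod_cast h1
  have c2 : ((Nat.descFactorial b (b-t) : ℕ) : ℂ) = (b.factorial : ℂ) / (t.factorial : ℂ) := by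
    rw [eq_div_iff (by exact_mod_cast Nat.factorial_ne_zero t)]; exact_mod_cast h2
  have c3 : ((Nat.descFactorial a s : ℕ) : ℂ) = (a.factorial : ℂ) / ((a-s).factorial : ℂ) := by
    rw [eq_div_iff (by exact_mod_cast Nat.factorial_ne_zero (a-s))]; exact_mod_cast h3
  have c4 : ((Nat.descFactorial b t : ℕ) : ℂ) = (b.factorial : ℂ) / ((b-t).factorial : ℂ) := by
    rw [eq_div_iff (by exact_mod_cast Nat.factorial_ne_zero (b-t))]; exact_mod_cast h4
  have c5 : ((((a-s)+(b-t)).choose (a-s) : ℕ) : ℂ)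
      = (((a-s)+(b-t)).factorial : ℂ) / (((a-s).factorial : ℂ) * ((b-t).factorial : ℂ)) := by
    rw [eq_div_iff (mul_ne_zero (by exact_mod_cast Nat.factorial_ne_zero _)
      (by exact_mod_cast Nat.factorial_ne_zero _))]
    push_cast [← h5]; ring
  have c6 : (((s+t).choose s : ℕ) : ℂ)
      = ((s+t).factorial : ℂ) / ((s.factorial : ℂ) * (t.factorial : ℂ)) := by
    rw [eq_div_iff (mul_ne_zero (by exact_mod_cast Nat.factorial_ne_zero _)
      (by exact_mod_cast Nat.factorial_ne_zero _))]
    push_cast [← h6]; ring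
  push_cast [c1, c2, c3, c4, c5, c6]
  field_simp

lemma compare (a b k : ℕ) (hk : k ≤ a + b) :
    Xop^[a+b-k] (Tm 0 a 0 b)
    = (((a+b-k).factorial : ℂ) / (k.factorial : ℂ)) • Yop^[k] (Tm a 0 b 0) := by
  rw [XopIter, YopIter, Finset.smul_sum]
  have hL : ∑ i ∈ range (a+b-k+1), co a b (a+b-k) i • Tm i (a-i) (a+b-k-i) (b-(a+b-k-i))
      = ∑ i ∈ range (a+1), co a b (a+b-k) i • Tm i (a-i) (a+b-k-i) (b-(a+b-k-i)) := by
    apply sum_range_congr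
    intro i hi
    rcases lt_or_ge a i with h | h
    · simp [co, Nat.descFactorial_eq_zero_iff_lt.mpr h]
    · have h2 : a+b-k < i := by omega
      simp [co, Nat.choose_eq_zero_of_lt h2]
  have hR : ∑ i ∈ range (k+1),
        (((a+b-k).factorial : ℂ) / (k.factorial : ℂ)) • co a b k i • Tm (a-i) i (b-(k-i)) (k-i)
      = ∑ i ∈ range (a+1),
        (((a+b-k).factorial : ℂ) / (k.factorial : ℂ)) • co a b k i • Tm (a-i) i (b-(k-i)) (k-i) := by
    apply sum_range_congr
    intro i hi
    rcases lt_or_ge a i with h | h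
    · simp [co, Nat.descFactorial_eq_zero_iff_lt.mpr h]
    · have h2 : k < i := by omega
      simp [co, Nat.choose_eq_zero_of_lt h2]
  rw [hL, hR]
  rw [← Finset.sum_range_reflect
    (fun i => (((a+b-k).factorial : ℂ) / (k.factorial : ℂ)) • co a b k i • Tm (a-i) i (b-(k-i)) (k-i)) (a+1)]
  apply Finset.sum_congr rfl
  intro i hi
  have hia : i ≤ a := by simpa using Nat.lt_succ_iff.mp (mem_range.mp hi)
  simp only [Nat.add_sub_cancel]
  rcases lt_or_ge (k + i) a with hc1 | hc1
  · -- both sides zero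
    have h1 : k < a - i := by omega
    have h2 : b < a+b-k-i := by omega
    simp [co, Nat.choose_eq_zero_of_lt h1, Nat.descFactorial_eq_zero_iff_lt.mpr h2]
  rcases lt_or_ge (a+b-k) i with hc2 | hc2
  · have h1 : a+b-k < i := hc2
    have h2 : b < k-(a-i) := by omega
    simp [co, Nat.choose_eq_zero_of_lt h1, Nat.descFactorial_eq_zero_iff_lt.mpr h2]
  · -- main case
    have hs : a - i ≤ a := Nat.sub_le a i
    have ht : k - (a-i) ≤ b := by omega
    have key := key_identity a b (a-i) (k-(a-i)) hs ht
    rw [show (a-i) + (k-(a-i)) = k by omega, show a-(a-i) = i by omega] at key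
    rw [show a-(a-i) = i by omega, show b-(k-(a-i)) = a+b-k-i by omega,
      show k-(a-i) = b-(a+b-k-i) by omega]
    rw [smul_smul]
    congr 1
    rw [eq_comm, div_mul_eq_mul_div, div_eq_iff (by exact_mod_cast Nat.factorial_ne_zero k)]
    rw [co, co]
    exact key.symm

lemma sum_co (a b k : ℕ) :
    ∑ i ∈ range (k+1), (k.choose i * a.descFactorial i * b.descFactorial (k-i))
    = (a+b).descFactorial k := by
  rw [Nat.descFactorial_eq_factorial_mul_choose, Nat.add_choose_eq,
    Finset.Nat.sum_antidiagonal_eq_sum_range_succ_mk, Finset.mul_sum]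
  apply Finset.sum_congr rfl
  intro i hi
  have hik : i ≤ k := by simpa using Nat.lt_succ_iff.mp (mem_range.mp hi)
  rw [Nat.descFactorial_eq_factorial_mul_choose, Nat.descFactorial_eq_factorial_mul_choose,
    ← Nat.choose_mul_factorial_mul_factorial hik]
  ring

lemma Yop_iter_ne (a b k : ℕ) (hk : k ≤ a + b) : Yop^[k] (Tm a 0 b 0) ≠ 0 := by
  intro h
  have h1 := congrArg (eval (fun _ => (1:ℂ))) h
  rw [YopIter] at h1
  simp only [map_sum, smul_eq_C_mul, map_mul, eval_C, map_zero, Tm, map_pow, eval_X,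
    one_pow, mul_one] at h1
  rw [show (∑ i ∈ range (k+1), co a b k i)
      = (((a+b).descFactorial k : ℕ) : ℂ) by
    rw [← sum_co a b k]; push_cast [co]; rfl] at h1
  have h2 : (a+b).descFactorial k = 0 := by exact_mod_cast h1
  rw [Nat.descFactorial_eq_zero_iff_lt] at h2
  omega

lemma U_ne : U ≠ 0 := by
  intro h
  have := congrArg (eval ![1,0,0,1]) h
  simp [U] at this

lemma Yop_U_mul (p : MvPolynomial (Fin 4) ℂ) : Yop (U * p) = U * Yop p := by
  simp [Yop, U, pderiv_mul, pderiv_X, Pi.single_apply]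
  ring

lemma Xop_U_mul (p : MvPolynomial (Fin 4) ℂ) : Xop (U * p) = U * Xop p := by
  simp [Xop, U, pderiv_mul, pderiv_X, Pi.single_apply]
  ring

lemma Yop_iter_U (k : ℕ) (p : MvPolynomial (Fin 4) ℂ) :
    Yop^[k] (U * p) = U * Yop^[k] p := by
  induction k with
  | zero => rfl
  | succ k ih =>
    rw [Function.iterate_succ_apply', Function.iterate_succ_apply', ih]
    exact Yop_U_mul _

lemma Xop_iter_U (k : ℕ) (p : MvPolynomial (Fin 4) ℂ) :
    Xop^[k] (U * p) = U * Xop^[k] p := by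
  induction k with
  | zero => rfl
  | succ k ih =>
    rw [Function.iterate_succ_apply', Function.iterate_succ_apply', ih]
    exact Xop_U_mul _

lemma hw_eq (a b : ℕ) :
    yv (a+1) 1 * zv (b+1) 2 - yv (a+1) 2 * zv (b+1) 1 = U * Tm a 0 b 0 := by
  rw [yv, yv, zv, zv, if_pos (by constructor <;> omega), if_pos (by constructor <;> omega),
    if_pos (by constructor <;> omega), if_pos (by constructor <;> omega)]
  rw [show (((a+1:ℕ):ℤ) + 1 - 1).toNat = a+1 by omega,
    show ((1:ℤ) - 1).toNat = 0 by omega,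
    show (((b+1:ℕ):ℤ) + 1 - 2).toNat = b by omega,
    show ((2:ℤ) - 1).toNat = 1 by omega,
    show (((a+1:ℕ):ℤ) + 1 - 2).toNat = a by omega,
    show (((b+1:ℕ):ℤ) + 1 - 1).toNat = b+1 by omega]
  rw [U, Tm]
  ring

lemma low_eq (a b : ℕ) :
    yv (a+1) ((a+1 : ℕ) : ℤ) * zv (b+1) (((b+1 : ℕ) : ℤ) + 1)
      - yv (a+1) (((a+1 : ℕ) : ℤ) + 1) * zv (b+1) ((b+1 : ℕ) : ℤ)
    = U * Tm 0 a 0 b := by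
  rw [yv, yv, zv, zv, if_pos (by constructor <;> omega), if_pos (by constructor <;> omega),
    if_pos (by constructor <;> omega), if_pos (by constructor <;> omega)]
  rw [show (((a+1:ℕ):ℤ) + 1 - ((a+1:ℕ):ℤ)).toNat = 1 by omega,
    show (((a+1:ℕ):ℤ) - 1).toNat = a by omega,
    show (((b+1:ℕ):ℤ) + 1 - (((b+1:ℕ):ℤ)+1)).toNat = 0 by omega,
    show ((((b+1:ℕ):ℤ)+1) - 1).toNat = b+1 by omega,
    show (((a+1:ℕ):ℤ) + 1 - (((a+1:ℕ):ℤ)+1)).toNat = 0 by omega,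
    show ((((a+1:ℕ):ℤ)+1) - 1).toNat = a+1 by omega,
    show (((b+1:ℕ):ℤ) + 1 - ((b+1:ℕ):ℤ)).toNat = 1 by omega,
    show (((b+1:ℕ):ℤ) - 1).toNat = b by omega]
  rw [U, Tm]
  ring

theorem lowest_weight_symmetry (d m : ℕ) (hd : 2 ≤ d) (hm : 2 ≤ m) :
    ∀ j : ℕ, 1 ≤ j → j ≤ m * d - 1 →
      Yop^[j - 1] (yv d 1 * zv ((m - 1) * d) 2 - yv d 2 * zv ((m - 1) * d) 1) ≠ 0 ∧
      Xop^[m * d - 1 - j]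
        (yv d (d : ℤ) * zv ((m - 1) * d) (((m - 1) * d : ℕ) + 1)
          - yv d ((d : ℤ) + 1) * zv ((m - 1) * d) (((m - 1) * d : ℕ) : ℤ)) ≠ 0 ∧
      ∃ lam : ℂ, lam ≠ 0 ∧
        Xop^[m * d - 1 - j]
          (yv d (d : ℤ) * zv ((m - 1) * d) (((m - 1) * d : ℕ) + 1)
            - yv d ((d : ℤ) + 1) * zv ((m - 1) * d) (((m - 1) * d : ℕ) : ℤ))
        = lam • Yop^[j - 1]
            (yv d 1 * zv ((m - 1) * d) 2 - yv d 2 * zv ((m - 1) * d) 1) := by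
  intro j hj1 hj2
  have hde : d + (m-1) * d = m * d := by
    have h1 : (m - 1) + 1 = m := by omega
    calc d + (m-1)*d = ((m-1)+1)*d := by ring
      _ = m * d := by rw [h1]
  have he2 : 2 ≤ (m-1)*d := by
    have : 1 * d ≤ (m-1) * d := Nat.mul_le_mul_right d (by omega)
    omega
  obtain ⟨a, ha⟩ : ∃ a, d = a + 1 := ⟨d - 1, by omega⟩
  obtain ⟨b, hb⟩ : ∃ b, (m-1) * d = b + 1 := ⟨(m-1)*d - 1, by omega⟩
  have hk : j - 1 ≤ a + b := by omega
  have hK : m * d - 1 - j = a + b - (j - 1) := by omega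
  rw [hK, hb, ha, hw_eq a b, low_eq a b, Yop_iter_U, Xop_iter_U, compare a b (j-1) hk]
  have hlam : (((a+b-(j-1)).factorial : ℂ) / ((j-1).factorial : ℂ)) ≠ 0 :=
    div_ne_zero (by exact_mod_cast Nat.factorial_ne_zero _)
      (by exact_mod_cast Nat.factorial_ne_zero _)
  have hT := Yop_iter_ne a b (j-1) hk
  refine ⟨mul_ne_zero U_ne hT, ?_, ?_⟩
  · rw [mul_smul_comm]
    exact smul_ne_zero hlam (mul_ne_zero U_ne hT)
  · exact ⟨_, hlam, mul_smul_comm _ _ _⟩
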